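/- Let X, Y ∈ S^m_{++} and ΔX, ΔY ∈ S^m. If the Jordan product (X + s·ΔX)∘(Y + s·ΔY) is positive definite for every s ∈ [0,1], then X + ΔX ∈ S^m_{++} and Y + ΔY ∈ S^m_{++}. -/

import Mathlib

open Matrix

noncomputable def jordan {ι : Type*} [Fintype ι] (X Y : Matrix ι ι ℝ) : Matrix ι ι ℝ :=
  (2:ℝ)⁻¹ • (X * Y + Y * X)

lemma jordan_comm' {ι : Type*} [Fintype ι] (X Y : Matrix ι ι ℝ) : jordan X Y = jordan Y X := by
  unfold jordan; rw [add_comm]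

/-- A real symmetric matrix line is Hermitian. -/
lemma herm_line' {m : ℕ} (X Δ : Matrix (Fin m) (Fin m) ℝ) (hX : X.IsHermitian)
    (hΔ : Δ.IsSymm) (s : ℝ) : (X + s • Δ).IsHermitian := by
  have hXt : Xᵀ = X := by
    have := hX; rwa [Matrix.IsHermitian, conjTranspose_eq_transpose_of_trivial] at this
  show (X + s • Δ)ᴴ = _
  rw [conjTranspose_eq_transpose_of_trivial, transpose_add, transpose_smul, hΔ.eq, hXt]

/-- A real symmetric matrix which is not positive definite has an eigenvector
with nonpositive eigenvalue. -/
lemma exists_nonpos_eigen {m : ℕ} {A : Matrix (Fin m) (Fin m) ℝ} (hA : A.IsHermitian)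
    (h : ¬ A.PosDef) : ∃ (v : Fin m → ℝ) (l : ℝ), v ≠ 0 ∧ l ≤ 0 ∧ A *ᵥ v = l • v := by
  by_cases hps : A.PosSemidef
  · rw [Matrix.posDef_iff_dotProduct_mulVec] at h
    push_neg at h
    obtain ⟨x, hx0, hx⟩ := h hA
    have h0 : star x ⬝ᵥ A *ᵥ x = 0 := le_antisymm hx ((posSemidef_iff_dotProduct_mulVec.mp hps).2 x)
    have hmv : A *ᵥ x = 0 := (hps.dotProduct_mulVec_zero_iff x).mp h0
    exact ⟨x, 0, hx0, le_refl 0, by simp [hmv]⟩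
  · have : ¬ ∀ i, 0 ≤ hA.eigenvalues i := fun hh => hps (hA.posSemidef_iff_eigenvalues_nonneg.mpr hh)
    push_neg at this
    obtain ⟨i, hi⟩ := this
    refine ⟨hA.eigenvectorBasis i, hA.eigenvalues i, ?_, le_of_lt hi,
      hA.mulVec_eigenvectorBasis i⟩
    have := hA.eigenvectorBasis.orthonormal.ne_zero i
    intro hc
    apply this
    ext j
    exact congrFun hc j

/-- If `A` is symmetric, the Jordan product is positive definite, but `A` is not positive
definite, then the quadratic form of `B` takes a negative value. -/
lemma neg_form_of_not_posDef {m : ℕ} {A B : Matrix (Fin m) (Fin m) ℝ} (hA : A.IsHermitian)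
    (hJ : (jordan A B).PosDef) (h : ¬ A.PosDef) : ∃ v, v ⬝ᵥ B *ᵥ v < 0 := by
  obtain ⟨v, l, hv0, hl, hev⟩ := exists_nonpos_eigen hA h
  have hAt : Aᵀ = A := by
    have := hA; rwa [Matrix.IsHermitian, conjTranspose_eq_transpose_of_trivial] at this
  have hq : 0 < v ⬝ᵥ (jordan A B) *ᵥ v := by
    have := hJ.dotProduct_mulVec_pos hv0
    simpa using this
  have hcomp : v ⬝ᵥ (jordan A B) *ᵥ v = l * (v ⬝ᵥ B *ᵥ v) := by
    unfold jordan
    rw [smul_mulVec, dotProduct_smul, add_mulVec, ← mulVec_mulVec, ← mulVec_mulVec,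
      hev, mulVec_smul, dotProduct_add, dotProduct_smul, dotProduct_mulVec (A := A),
      ← mulVec_transpose, hAt, hev, smul_dotProduct]
    simp only [smul_eq_mul]
    ring
  rw [hcomp] at hq
  refine ⟨v, ?_⟩
  nlinarith

/-- If the Jordan product is positive definite but `A`, `B` are not both positive definite,
then the quadratic form of `A` takes a negative value. -/
lemma neg_A_form {m : ℕ} {A B : Matrix (Fin m) (Fin m) ℝ} (hA : A.IsHermitian)
    (hB : B.IsHermitian) (hJ : (jordan A B).PosDef) (h : ¬ (A.PosDef ∧ B.PosDef)) :
    ∃ v, v ⬝ᵥ A *ᵥ v < 0 := by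
  have hJ' : (jordan B A).PosDef := by rwa [jordan_comm']
  by_cases hAP : A.PosDef
  · have hBP : ¬ B.PosDef := fun hBP => h ⟨hAP, hBP⟩
    exact neg_form_of_not_posDef hB hJ' hBP
  · obtain ⟨w, hw⟩ := neg_form_of_not_posDef hA hJ hAP
    have hw0 : w ≠ 0 := by rintro rfl; simp at hw
    have hBP : ¬ B.PosDef := by
      intro hBP
      have := hBP.dotProduct_mulVec_pos hw0
      simp only [star_trivial] at this
      linarith
    exact neg_form_of_not_posDef hB hJ' hBP

lemma quad_abs_bound {m : ℕ} (Δ : Matrix (Fin m) (Fin m) ℝ) (v : Fin m → ℝ) :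
    |v ⬝ᵥ Δ *ᵥ v| ≤ (∑ i, ∑ j, |Δ i j|) * (v ⬝ᵥ v) := by
  have hS : ∀ k : Fin m, (v k)^2 ≤ v ⬝ᵥ v := by
    intro k
    have : ∀ j ∈ Finset.univ, 0 ≤ v j * v j := fun j _ => mul_self_nonneg _
    have h := Finset.single_le_sum this (Finset.mem_univ k)
    simpa [dotProduct, sq] using h
  have key : ∀ i j : Fin m, |v i * (Δ i j * v j)| ≤ |Δ i j| * (v ⬝ᵥ v) := by
    intro i j
    have h1 : |v i * (Δ i j * v j)| = |Δ i j| * (|v i| * |v j|) := by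
      rw [abs_mul, abs_mul]; ring
    rw [h1]
    apply mul_le_mul_of_nonneg_left _ (abs_nonneg _)
    nlinarith [hS i, hS j, sq_abs (v i), sq_abs (v j), sq_nonneg (|v i| - |v j|)]
  calc |v ⬝ᵥ Δ *ᵥ v| = |∑ i, ∑ j, v i * (Δ i j * v j)| := by
        simp [dotProduct, mulVec, Finset.mul_sum]
    _ ≤ ∑ i, |∑ j, v i * (Δ i j * v j)| := Finset.abs_sum_le_sum_abs _ _
    _ ≤ ∑ i, ∑ j, |v i * (Δ i j * v j)| :=
        Finset.sum_le_sum (fun i _ => Finset.abs_sum_le_sum_abs _ _)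
    _ ≤ ∑ i, ∑ j, |Δ i j| * (v ⬝ᵥ v) :=
        Finset.sum_le_sum (fun i _ => Finset.sum_le_sum (fun j _ => key i j))
    _ = (∑ i, ∑ j, |Δ i j|) * (v ⬝ᵥ v) := by rw [Finset.sum_mul]; simp [Finset.sum_mul]

/-- The quadratic form of a positive definite matrix is bounded below by a positive multiple
of the squared norm. -/
lemma quadratic_lower_bound {m : ℕ} {M : Matrix (Fin m) (Fin m) ℝ} (hM : M.PosDef) :
    ∃ c > 0, ∀ v : Fin m → ℝ, c * (v ⬝ᵥ v) ≤ v ⬝ᵥ M *ᵥ v := by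
  rcases Nat.eq_zero_or_pos m with hm | hm
  · refine ⟨1, one_pos, fun v => ?_⟩
    subst hm
    simp [dotProduct]
  · haveI : NeZero m := ⟨hm.ne'⟩
    have hH := hM.1
    set c : ℝ := Finset.univ.inf' (Finset.univ_nonempty) hH.eigenvalues with hc
    obtain ⟨i0, _, hi0⟩ := Finset.exists_mem_eq_inf' (Finset.univ_nonempty) hH.eigenvalues
    have hcpos : 0 < c := by rw [hc, hi0]; exact hM.eigenvalues_pos i0
    refine ⟨c, hcpos, fun v => ?_⟩
    set V : Matrix (Fin m) (Fin m) ℝ := (hH.eigenvectorUnitary : Matrix (Fin m) (Fin m) ℝ) with hV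
    have hVt : star V = Vᵀ := by
      rw [Matrix.star_eq_conjTranspose, conjTranspose_eq_transpose_of_trivial]
    have hVV : V * Vᵀ = 1 := by
      rw [← hVt]; exact (Matrix.mem_unitaryGroup_iff).mp hH.eigenvectorUnitary.2
    set w : Fin m → ℝ := Vᵀ *ᵥ v with hw
    have hww : w ⬝ᵥ w = v ⬝ᵥ v := by
      rw [hw, dotProduct_mulVec, ← mulVec_transpose, transpose_transpose, mulVec_mulVec, hVV,
        one_mulVec]
    have hspec : v ⬝ᵥ M *ᵥ v = w ⬝ᵥ (diagonal (RCLike.ofReal ∘ hH.eigenvalues) *ᵥ w) := by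
      conv_lhs => rw [hH.spectral_theorem, Unitary.conjStarAlgAut_apply]
      rw [← mulVec_mulVec, ← mulVec_mulVec, dotProduct_mulVec (A := V), ← mulVec_transpose, hVt]
    have hdiag : w ⬝ᵥ (diagonal (RCLike.ofReal ∘ hH.eigenvalues) *ᵥ w)
        = ∑ i, hH.eigenvalues i * (w i)^2 := by
      simp [dotProduct, mulVec_diagonal, RCLike.ofReal]
      exact Finset.sum_congr rfl (fun i _ => by ring)
    rw [hspec, hdiag, ← hww]
    have : c * (w ⬝ᵥ w) = ∑ i, c * (w i)^2 := by
      simp only [dotProduct, Finset.mul_sum]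
      exact Finset.sum_congr rfl (fun i _ => by ring)
    rw [this]
    apply Finset.sum_le_sum
    intro i _
    have : c ≤ hH.eigenvalues i := Finset.inf'_le _ (Finset.mem_univ i)
    nlinarith [sq_nonneg (w i)]

/-- Positive definiteness is stable along a symmetric line. -/
lemma posdef_stable {m : ℕ} {M Δ : Matrix (Fin m) (Fin m) ℝ} (hM : M.PosDef)
    (hΔ : Δ.IsHermitian) : ∃ ε > 0, ∀ t : ℝ, |t| < ε → (M + t • Δ).PosDef := by
  obtain ⟨c, hc, hq⟩ := quadratic_lower_bound hM
  set K : ℝ := ∑ i, ∑ j, |Δ i j| with hK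
  have hK0 : 0 ≤ K := Finset.sum_nonneg fun i _ => Finset.sum_nonneg fun j _ => abs_nonneg _
  refine ⟨c / (K + 1), by positivity, fun t ht => ?_⟩
  rw [posDef_iff_dotProduct_mulVec]
  constructor
  · have hMt : Mᵀ = M := by
      have := hM.1; rwa [Matrix.IsHermitian, conjTranspose_eq_transpose_of_trivial] at this
    have hΔt : Δᵀ = Δ := by
      have := hΔ; rwa [Matrix.IsHermitian, conjTranspose_eq_transpose_of_trivial] at this
    show (M + t • Δ)ᴴ = _
    rw [conjTranspose_eq_transpose_of_trivial, transpose_add, transpose_smul, hMt, hΔt]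
  · intro v hv0
    have hS : 0 < v ⬝ᵥ v := by
      rcases lt_or_eq_of_le (dotProduct_self_star_nonneg v : (0:ℝ) ≤ _) with h | h
      · simpa using h
      · exfalso; apply hv0
        have : v ⬝ᵥ v = 0 := by simpa using h.symm
        exact dotProduct_self_eq_zero.mp this
    have habs : |t * (v ⬝ᵥ Δ *ᵥ v)| < c * (v ⬝ᵥ v) := by
      have h1 : |t * (v ⬝ᵥ Δ *ᵥ v)| ≤ |t| * (K * (v ⬝ᵥ v)) := by
        rw [abs_mul]
        exact mul_le_mul_of_nonneg_left (quad_abs_bound Δ v) (abs_nonneg t)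
      have h2 : |t| * (K * (v ⬝ᵥ v)) < c * (v ⬝ᵥ v) := by
        have htK : |t| * (K + 1) < c := by
          calc |t| * (K + 1) < (c / (K + 1)) * (K + 1) := by
                apply mul_lt_mul_of_pos_right ht (by positivity)
            _ = c := by field_simp
        nlinarith [abs_nonneg t]
      linarith
    have hform : v ⬝ᵥ (M + t • Δ) *ᵥ v = v ⬝ᵥ M *ᵥ v + t * (v ⬝ᵥ Δ *ᵥ v) := by
      rw [add_mulVec, dotProduct_add, smul_mulVec, dotProduct_smul, smul_eq_mul]
    have := hq v
    have habs' := abs_lt.mp habs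
    have : 0 < v ⬝ᵥ (M + t • Δ) *ᵥ v := by rw [hform]; linarith
    simpa using this

/-- if the Jordan product along the segment stays positive definite,
then the endpoints `X + ΔX` and `Y + ΔY` are positive definite. -/
theorem endpoint_posdef_of_jordan_posdef {m : ℕ} (X Y ΔX ΔY : Matrix (Fin m) (Fin m) ℝ)
    (hX : X.PosDef) (hY : Y.PosDef) (hΔX : ΔX.IsSymm) (hΔY : ΔY.IsSymm)
    (h : ∀ s : ℝ, s ∈ Set.Icc (0:ℝ) 1 → (jordan (X + s • ΔX) (Y + s • ΔY)).PosDef) :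
    (X + ΔX).PosDef ∧ (Y + ΔY).PosDef := by
  by_contra hcon
  have hA : ∀ s : ℝ, (X + s • ΔX).IsHermitian := herm_line' X ΔX hX.1 hΔX
  have hB : ∀ s : ℝ, (Y + s • ΔY).IsHermitian := herm_line' Y ΔY hY.1 hΔY
  set T : Set ℝ :=
    {s | s ∈ Set.Icc (0:ℝ) 1 ∧ ¬ ((X + s • ΔX).PosDef ∧ (Y + s • ΔY).PosDef)} with hT
  have h1T : (1:ℝ) ∈ T := by
    refine ⟨⟨zero_le_one, le_refl 1⟩, ?_⟩
    simpa [one_smul] using hcon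
  have hne : T.Nonempty := ⟨1, h1T⟩
  have hbdd : BddBelow T := ⟨0, fun t ht => ht.1.1⟩
  set s₀ : ℝ := sInf T with hs₀
  have hs₀0 : 0 ≤ s₀ := le_csInf hne (fun t ht => ht.1.1)
  have hs₀1 : s₀ ≤ 1 := csInf_le hbdd h1T
  have h0T : (0:ℝ) ∉ T := by
    intro h0
    exact h0.2 ⟨by simpa using hX, by simpa using hY⟩
  by_cases hmem : s₀ ∈ T
  · -- s₀ ∈ T : find a smaller element of T, contradiction with sInf
    have hs₀pos : 0 < s₀ := lt_of_le_of_ne hs₀0 (fun hh => h0T (hh ▸ hmem))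
    obtain ⟨v, hv⟩ := neg_A_form (hA s₀) (hB s₀) (h s₀ ⟨hs₀0, hs₀1⟩) hmem.2
    set a : ℝ := v ⬝ᵥ X *ᵥ v with ha'
    set b : ℝ := v ⬝ᵥ ΔX *ᵥ v with hb'
    have hform : ∀ s : ℝ, v ⬝ᵥ (X + s • ΔX) *ᵥ v = a + s * b := by
      intro s
      rw [add_mulVec, dotProduct_add, smul_mulVec, dotProduct_smul, smul_eq_mul]
    have hvq : a + s₀ * b < 0 := by rw [← hform s₀]; exact hv
    have hv0 : v ≠ 0 := by
      rintro rfl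
      rw [hform s₀] at hv
      simp [ha', hb'] at hv
    have hapos : 0 < a := by
      have := hX.dotProduct_mulVec_pos hv0
      simpa [ha'] using this
    have hbneg : b < 0 := by nlinarith
    set q : ℝ := a + s₀ * b with hq'
    have hqb : 0 < q / b := div_pos_of_neg_of_neg hvq hbneg
    set d : ℝ := min s₀ (q / b) / 2 with hd'
    have hdpos : 0 < d := by
      apply div_pos _ two_pos
      exact lt_min hs₀pos hqb
    have hd1 : d ≤ s₀ / 2 := by
      apply div_le_div_of_nonneg_right (min_le_left _ _) (by norm_num)
    have hd2 : d < q / b := by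
      have : d ≤ (q / b) / 2 := div_le_div_of_nonneg_right (min_le_right _ _) (by norm_num)
      linarith
    set s' : ℝ := s₀ - d with hs''
    have hs'0 : 0 ≤ s' := by
      have : d ≤ s₀ := by linarith
      simp [hs'']; linarith
    have hs'lt : s' < s₀ := by simp [hs'']; linarith
    have hs'1 : s' ≤ 1 := le_of_lt (lt_of_lt_of_le hs'lt hs₀1)
    have hfs' : a + s' * b < 0 := by
      have hdb : q < d * b := by
        have := (lt_div_iff_of_neg hbneg).mp hd2
        linarith
      have : a + s' * b = q - d * b := by rw [hs'', hq']; ring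
      rw [this]; linarith
    have hs'T : s' ∈ T := by
      refine ⟨⟨hs'0, hs'1⟩, ?_⟩
      rintro ⟨hPA, -⟩
      have := hPA.dotProduct_mulVec_pos hv0
      simp only [star_trivial] at this
      rw [hform s'] at this
      linarith
    have : s₀ ≤ s' := csInf_le hbdd hs'T
    linarith
  · -- s₀ ∉ T : both matrices PD at s₀, use stability to exclude nearby points of T
    have hPD : (X + s₀ • ΔX).PosDef ∧ (Y + s₀ • ΔY).PosDef := by
      by_contra hc
      exact hmem ⟨⟨hs₀0, hs₀1⟩, hc⟩
    have hΔXH : ΔX.IsHermitian := by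
      rw [Matrix.IsHermitian, conjTranspose_eq_transpose_of_trivial]; exact hΔX.eq
    have hΔYH : ΔY.IsHermitian := by
      rw [Matrix.IsHermitian, conjTranspose_eq_transpose_of_trivial]; exact hΔY.eq
    obtain ⟨εA, hεA, hstabA⟩ := posdef_stable hPD.1 hΔXH
    obtain ⟨εB, hεB, hstabB⟩ := posdef_stable hPD.2 hΔYH
    set ε : ℝ := min εA εB with hε'
    have hεpos : 0 < ε := lt_min hεA hεB
    obtain ⟨t, htT, htlt⟩ : ∃ t ∈ T, t < s₀ + ε := by
      by_contra hc
      push_neg at hc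
      have : s₀ + ε ≤ s₀ := le_csInf hne hc
      linarith
    have hts₀ : s₀ ≤ t := csInf_le hbdd htT
    have htabs : |t - s₀| < ε := by
      rw [abs_of_nonneg (by linarith)]
      linarith
    have hXeq : X + t • ΔX = (X + s₀ • ΔX) + (t - s₀) • ΔX := by
      rw [add_assoc, ← add_smul]
      congr 2
      ring
    have hYeq : Y + t • ΔY = (Y + s₀ • ΔY) + (t - s₀) • ΔY := by
      rw [add_assoc, ← add_smul]
      congr 2
      ring
    refine htT.2 ⟨?_, ?_⟩
    · rw [hXeq]
      exact hstabA (t - s₀) (lt_of_lt_of_le htabs (min_le_left _ _))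
    · rw [hYeq]
      exact hstabB (t - s₀) (lt_of_lt_of_le htabs (min_le_right _ _))
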